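/- For any graph G on n vertices and any vertex v of G, the square of the spectral radius of the adjacency matrix of G is at most the square of the spectral radius of G − v plus twice the degree of v; that is, ρ(G)² ≤ ρ(G−v)² + 2·d(v). -/

import Mathlib

open SimpleGraph Matrix

section SpectralLemmas

variable {V : Type*} [Fintype V] [DecidableEq V]

private lemma dot_repr (M : Matrix V V ℝ) (hM : M.IsHermitian) (z w : EuclideanSpace ℝ V) :
    ∑ u, z u * w u = ∑ i, hM.eigenvectorBasis.repr z i * hM.eigenvectorBasis.repr w i := by
  have h1 : (inner ℝ z w : ℝ) = inner ℝ (hM.eigenvectorBasis.repr z) (hM.eigenvectorBasis.repr w) :=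
    (hM.eigenvectorBasis.repr.inner_map_map z w).symm
  simp only [PiLp.inner_apply, RCLike.inner_apply', starRingEnd_apply, star_trivial] at h1
  exact h1

omit [Fintype V] [DecidableEq V] in
private lemma msymm (M : Matrix V V ℝ) (hM : M.IsHermitian) (u w : V) : M u w = M w u := by
  have := congrFun (congrFun hM w) u
  simpa [Matrix.conjTranspose_apply] using this

private lemma repr_mulVec (M : Matrix V V ℝ) (hM : M.IsHermitian) (z : EuclideanSpace ℝ V) (i : V) :
    hM.eigenvectorBasis.repr ((WithLp.equiv 2 (V → ℝ)).symm (M *ᵥ z)) i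
      = hM.eigenvalues i * hM.eigenvectorBasis.repr z i := by
  set b := hM.eigenvectorBasis with hb
  rw [OrthonormalBasis.repr_apply_apply, OrthonormalBasis.repr_apply_apply]
  have hbi : ∀ w, (M *ᵥ (fun u => (b i) u)) w = hM.eigenvalues i * (b i) w := by
    intro w
    have := congrFun (hM.mulVec_eigenvectorBasis i) w
    simpa using this
  simp only [PiLp.inner_apply, RCLike.inner_apply', starRingEnd_apply, star_trivial,
    WithLp.equiv_symm_apply, PiLp.toLp_apply]
  have swap : ∑ u, (b i) u * (M *ᵥ (z : V → ℝ)) u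
      = ∑ w, (M *ᵥ (fun u => (b i) u)) w * (z : V → ℝ) w := by
    simp only [Matrix.mulVec, dotProduct, Finset.mul_sum, Finset.sum_mul]
    rw [Finset.sum_comm]
    refine Finset.sum_congr rfl fun w _ => Finset.sum_congr rfl fun u _ => ?_
    rw [msymm M hM u w]; ring
  calc ∑ u, (b i) u * (M *ᵥ (z : V → ℝ)) u
      = ∑ w, (M *ᵥ (fun u => (b i) u)) w * (z : V → ℝ) w := swap
    _ = ∑ w, hM.eigenvalues i * ((b i) w * z w) := by
        refine Finset.sum_congr rfl fun w _ => ?_; rw [hbi w]; ring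
    _ = hM.eigenvalues i * ∑ w, (b i) w * z w := by rw [Finset.mul_sum]

private lemma quadform_repr (M : Matrix V V ℝ) (hM : M.IsHermitian) (z : EuclideanSpace ℝ V) :
    ∑ u, z u * (M *ᵥ (z : V → ℝ)) u
      = ∑ i, hM.eigenvalues i * (hM.eigenvectorBasis.repr z i)^2 := by
  have := dot_repr M hM z ((WithLp.equiv 2 (V → ℝ)).symm (M *ᵥ (z : V → ℝ)))
  simp only [repr_mulVec] at this
  simp only [WithLp.equiv_symm_apply, PiLp.toLp_apply] at this
  rw [this]
  exact Finset.sum_congr rfl fun i _ => by ring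

private lemma normsq_mulVec_repr (M : Matrix V V ℝ) (hM : M.IsHermitian) (z : EuclideanSpace ℝ V) :
    ∑ u, (M *ᵥ (z : V → ℝ)) u ^ 2
      = ∑ i, (hM.eigenvalues i)^2 * (hM.eigenvectorBasis.repr z i)^2 := by
  have := dot_repr M hM ((WithLp.equiv 2 (V → ℝ)).symm (M *ᵥ (z : V → ℝ)))
    ((WithLp.equiv 2 (V → ℝ)).symm (M *ᵥ (z : V → ℝ)))
  simp only [repr_mulVec] at this
  simp only [WithLp.equiv_symm_apply, PiLp.toLp_apply] at this
  calc ∑ u, (M *ᵥ (z : V → ℝ)) u ^ 2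
      = ∑ u, (M *ᵥ (z : V → ℝ)) u * (M *ᵥ (z : V → ℝ)) u :=
        Finset.sum_congr rfl fun u _ => by ring
    _ = _ := by rw [this]; exact Finset.sum_congr rfl fun i _ => by ring

private lemma normsq_repr (M : Matrix V V ℝ) (hM : M.IsHermitian) (z : EuclideanSpace ℝ V) :
    ∑ u, z u ^ 2 = ∑ i, (hM.eigenvectorBasis.repr z i)^2 := by
  have := dot_repr M hM z z
  calc ∑ u, z u ^ 2 = ∑ u, z u * z u := Finset.sum_congr rfl fun u _ => by ring
    _ = _ := by rw [this]; exact Finset.sum_congr rfl fun i _ => by ring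

private lemma rayleigh_le [Nonempty V] (M : Matrix V V ℝ) (hM : M.IsHermitian) (z : V → ℝ) :
    ∑ u, z u * (M *ᵥ z) u ≤ (⨆ i, hM.eigenvalues i) * ∑ u, z u ^ 2 := by
  have hz := quadform_repr M hM ((WithLp.equiv 2 (V → ℝ)).symm z)
  have hn := normsq_repr M hM ((WithLp.equiv 2 (V → ℝ)).symm z)
  have hz' : ∑ u, z u * (M *ᵥ z) u
      = ∑ i, hM.eigenvalues i * (hM.eigenvectorBasis.repr ((WithLp.equiv 2 (V → ℝ)).symm z) i)^2 := hz
  have hn' : ∑ u, z u ^ 2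
      = ∑ i, (hM.eigenvectorBasis.repr ((WithLp.equiv 2 (V → ℝ)).symm z) i)^2 := hn
  rw [hz', hn', Finset.mul_sum]
  refine Finset.sum_le_sum fun i _ => ?_
  have h1 : hM.eigenvalues i ≤ ⨆ j, hM.eigenvalues j :=
    le_ciSup (Set.Finite.bddAbove (Set.finite_range _)) i
  exact mul_le_mul_of_nonneg_right h1 (sq_nonneg _)

private lemma normsq_eigenbasis (M : Matrix V V ℝ) (hM : M.IsHermitian) (i : V) :
    ∑ u, (hM.eigenvectorBasis i) u ^ 2 = 1 := by
  have h := hM.eigenvectorBasis.orthonormal.1 i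
  have h2 : (inner ℝ (hM.eigenvectorBasis i) (hM.eigenvectorBasis i) : ℝ) = 1 := by
    rw [real_inner_self_eq_norm_sq, h]; norm_num
  simp only [PiLp.inner_apply, RCLike.inner_apply', starRingEnd_apply, star_trivial] at h2
  rw [← h2]
  exact Finset.sum_congr rfl fun u _ => by ring

private lemma iSup_eig_nonneg [Nonempty V] (M : Matrix V V ℝ) (hM : M.IsHermitian)
    (hMnn : ∀ u w, 0 ≤ M u w) : 0 ≤ ⨆ j, hM.eigenvalues j := by
  obtain ⟨i⟩ := (inferInstance : Nonempty V)
  have h1 := rayleigh_le M hM (Pi.single i 1)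
  have h2 : ∑ u, (Pi.single i 1 : V → ℝ) u * (M *ᵥ Pi.single i 1) u = M i i := by
    rw [Finset.sum_eq_single i]
    · simp [Matrix.mulVec_single]
    · intro b _ hb; simp [Pi.single_apply, hb]
    · simp
  have h3 : ∑ u, (Pi.single i 1 : V → ℝ) u ^ 2 = 1 := by
    rw [Finset.sum_eq_single i]
    · simp
    · intro b _ hb; simp [Pi.single_apply, hb]
    · simp
  rw [h2, h3, mul_one] at h1
  exact le_trans (hMnn i i) h1

private lemma eig_sq_le (M : Matrix V V ℝ) (hM : M.IsHermitian) (hMnn : ∀ u w, 0 ≤ M u w) (i : V) :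
    (hM.eigenvalues i)^2 ≤ (⨆ j, hM.eigenvalues j)^2 := by
  haveI : Nonempty V := ⟨i⟩
  set ρ := ⨆ j, hM.eigenvalues j with hρ
  have habs : |hM.eigenvalues i| ≤ ρ := by
    set x : V → ℝ := fun u => (hM.eigenvectorBasis i) u with hx
    have hxn : ∑ u, x u ^ 2 = 1 := normsq_eigenbasis M hM i
    have hmv : ∀ u, (M *ᵥ x) u = hM.eigenvalues i * x u := by
      intro u
      have := congrFun (hM.mulVec_eigenvectorBasis i) u
      simpa using this
    have hquad : ∑ u, x u * (M *ᵥ x) u = hM.eigenvalues i := by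
      calc ∑ u, x u * (M *ᵥ x) u = ∑ u, hM.eigenvalues i * x u ^ 2 :=
            Finset.sum_congr rfl fun u _ => by rw [hmv u]; ring
        _ = hM.eigenvalues i := by rw [← Finset.mul_sum, hxn, mul_one]
    have hb1 : |hM.eigenvalues i| ≤ ∑ u, |x u| * (M *ᵥ fun u => |x u|) u := by
      rw [← hquad]
      calc |∑ u, x u * (M *ᵥ x) u| ≤ ∑ u, |x u * (M *ᵥ x) u| := Finset.abs_sum_le_sum_abs _ _
        _ ≤ ∑ u, |x u| * (M *ᵥ fun u => |x u|) u := by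
            refine Finset.sum_le_sum fun u _ => ?_
            rw [abs_mul]
            refine mul_le_mul_of_nonneg_left ?_ (abs_nonneg _)
            simp only [Matrix.mulVec, dotProduct]
            calc |∑ w, M u w * x w| ≤ ∑ w, |M u w * x w| := Finset.abs_sum_le_sum_abs _ _
              _ ≤ ∑ w, M u w * |x w| := by
                  refine Finset.sum_le_sum fun w _ => ?_
                  rw [abs_mul, abs_of_nonneg (hMnn u w)]
    have hb2 := rayleigh_le M hM (fun u => |x u|)
    have hb3 : ∑ u, |x u| ^ 2 = 1 := by
      rw [← hxn]; exact Finset.sum_congr rfl fun u _ => by rw [sq_abs]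
    rw [hb3, mul_one] at hb2
    exact hb1.trans hb2
  calc (hM.eigenvalues i)^2 = |hM.eigenvalues i|^2 := (sq_abs _).symm
    _ ≤ ρ^2 := pow_le_pow_left₀ (abs_nonneg _) habs 2

private lemma normsq_mulVec_le (M : Matrix V V ℝ) (hM : M.IsHermitian) (r : ℝ)
    (hr : ∀ i, (hM.eigenvalues i)^2 ≤ r) (z : V → ℝ) :
    ∑ u, (M *ᵥ z) u ^ 2 ≤ r * ∑ u, z u ^ 2 := by
  have h1 : ∑ u, (M *ᵥ z) u ^ 2
      = ∑ i, (hM.eigenvalues i)^2 * (hM.eigenvectorBasis.repr ((WithLp.equiv 2 (V → ℝ)).symm z) i)^2 :=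
    normsq_mulVec_repr M hM ((WithLp.equiv 2 (V → ℝ)).symm z)
  have h2 : ∑ u, z u ^ 2
      = ∑ i, (hM.eigenvectorBasis.repr ((WithLp.equiv 2 (V → ℝ)).symm z) i)^2 :=
    normsq_repr M hM ((WithLp.equiv 2 (V → ℝ)).symm z)
  rw [h1, h2, Finset.mul_sum]
  exact Finset.sum_le_sum fun i _ => mul_le_mul_of_nonneg_right (hr i) (sq_nonneg _)

private lemma cross_bound (a T d σ s : ℝ) (hs : 0 ≤ s) (hd : 0 ≤ d)
    (hT : T^2 ≤ d * σ^2 * s) : 2*a*T ≤ a^2*σ^2 + d*s := by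
  have hR : 0 ≤ a^2*σ^2 + d*s := by positivity
  nlinarith [sq_nonneg (a^2*σ^2 - d*s),
    mul_nonneg (sq_nonneg a) (by linarith : (0:ℝ) ≤ d*σ^2*s - T^2), hR]

end SpectralLemmas

noncomputable def specRad {V : Type*} [Fintype V] [DecidableEq V] (G : SimpleGraph V) : ℝ :=
  letI := Classical.decRel G.Adj
  have h : (G.adjMatrix ℝ).IsHermitian := by
    ext i j
    simp [Matrix.conjTranspose_apply, SimpleGraph.adjMatrix_apply, G.adj_comm i j]
  ⨆ i, h.eigenvalues i

private lemma specRad_eq {V : Type*} [Fintype V] [DecidableEq V] (G : SimpleGraph V)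
    [inst : DecidableRel G.Adj] (h : (G.adjMatrix ℝ).IsHermitian) :
    specRad G = ⨆ i, h.eigenvalues i := by
  have hm : (@SimpleGraph.adjMatrix ℝ V G (Classical.decRel G.Adj) _ _)
      = @SimpleGraph.adjMatrix ℝ V G inst _ _ := by
    ext i j
    by_cases hij : G.Adj i j <;> simp [SimpleGraph.adjMatrix_apply, hij]
  unfold specRad
  revert h
  rw [← hm]
  intro h
  rfl

/-- For any graph `G` and vertex `v`, `ρ(G)² ≤ ρ(G−v)² + 2·d(v)`. -/
theorem stmt0 {V : Type*} [Fintype V] [DecidableEq V] (G : SimpleGraph V)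
    [DecidableRel G.Adj] (v : V) :
    specRad G ^ 2 ≤ specRad (G.induce ({v}ᶜ : Set V)) ^ 2 + 2 * (G.degree v : ℝ) := by
  have hA : (G.adjMatrix ℝ).IsHermitian := by
    ext i j
    simp [Matrix.conjTranspose_apply, SimpleGraph.adjMatrix_apply, G.adj_comm i j]
  set G' : SimpleGraph ({v}ᶜ : Set V) := G.induce ({v}ᶜ : Set V) with hG'
  letI instB : DecidableRel G'.Adj := Classical.decRel _
  have hB : (G'.adjMatrix ℝ).IsHermitian := by
    ext i j
    simp [Matrix.conjTranspose_apply, SimpleGraph.adjMatrix_apply, G'.adj_comm i j]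
  rw [specRad_eq G hA, specRad_eq G' hB]
  haveI : Nonempty V := ⟨v⟩
  set A := G.adjMatrix ℝ with hAdef
  set B := G'.adjMatrix ℝ with hBdef
  set ρ := ⨆ i, hA.eigenvalues i with hρdef
  set σ := ⨆ i, hB.eigenvalues i with hσdef
  -- nonnegativity of adjacency entries
  have hAnn : ∀ u w, 0 ≤ A u w := fun u w => by
    rw [hAdef]; simp only [SimpleGraph.adjMatrix_apply]; positivity
  have hBnn : ∀ u w, 0 ≤ B u w := fun u w => by
    rw [hBdef]; simp only [SimpleGraph.adjMatrix_apply]; positivity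
  -- top eigenvalue attained
  obtain ⟨i₀, hi₀⟩ := Finite.exists_max hA.eigenvalues
  have hρeq : ρ = hA.eigenvalues i₀ :=
    le_antisymm (ciSup_le hi₀) (le_ciSup (Set.Finite.bddAbove (Set.finite_range _)) i₀)
  set x : V → ℝ := fun u => (hA.eigenvectorBasis i₀) u with hxdef
  have hxn : ∑ u, x u ^ 2 = 1 := normsq_eigenbasis _ hA i₀
  have hmv : ∀ u, (A *ᵥ x) u = ρ * x u := by
    intro u
    have := congrFun (hA.mulVec_eigenvectorBasis i₀) u
    rw [hρeq]
    simpa using this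
  have hρsq : ρ^2 = ∑ u, (A *ᵥ x) u ^ 2 := by
    have h1 : ∀ u, (A *ᵥ x) u ^ 2 = ρ^2 * x u ^ 2 := fun u => by rw [hmv u]; ring
    rw [Finset.sum_congr rfl fun u _ => h1 u, ← Finset.mul_sum, hxn, mul_one]
  -- sum splitting
  have hsplit : ∀ f : V → ℝ, ∑ u, f u = f v + ∑ u : ({v}ᶜ : Set V), f ↑u := by
    intro f
    rw [← Finset.sum_subtype (Finset.univ.erase v) (fun u => by simp) f,
      ← Finset.add_sum_erase Finset.univ f (Finset.mem_univ v)]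
  set a := x v with hadef
  set y : ({v}ᶜ : Set V) → ℝ := fun u => x ↑u with hydef
  set c : ({v}ᶜ : Set V) → ℝ := fun u => A ↑u v with hcdef
  set d : ℝ := (G.degree v : ℝ) with hddef
  have hd0 : 0 ≤ d := Nat.cast_nonneg _
  have hyn : ∑ u : ({v}ᶜ : Set V), y u ^ 2 = 1 - a^2 := by
    have h1 := hsplit (fun u => x u ^ 2)
    rw [hxn] at h1
    simp only [hydef, hadef]
    linarith
  have ha1 : a^2 ≤ 1 := by
    have h1 : (0:ℝ) ≤ ∑ u : ({v}ᶜ : Set V), y u ^ 2 :=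
      Finset.sum_nonneg fun u _ => sq_nonneg _
    linarith [hyn]
  -- decomposition of (A *ᵥ x) off v
  have hBA : ∀ (u w : ({v}ᶜ : Set V)), B u w = A ↑u ↑w := by
    intro u w
    rw [hBdef, hAdef]
    simp [SimpleGraph.adjMatrix_apply, hG', SimpleGraph.comap_adj]
  have hdecomp : ∀ u : ({v}ᶜ : Set V), (A *ᵥ x) ↑u = (B *ᵥ y) u + a * c u := by
    intro u
    have h1 : (A *ᵥ x) ↑u = ∑ w, A ↑u w * x w := rfl
    have h2 : (B *ᵥ y) u = ∑ w : ({v}ᶜ : Set V), A ↑u ↑w * x ↑w := by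
      simp only [Matrix.mulVec, dotProduct]
      exact Finset.sum_congr rfl fun w _ => by rw [hBA u w]
    rw [h1, hsplit (fun w => A ↑u w * x w), h2]
    simp only [hcdef]
    ring
  -- column sums
  have hcolsum : ∑ u, A u v = d := by
    have h1 : (A *ᵥ Function.const V (1:ℝ)) v = G.degree v * 1 :=
      SimpleGraph.adjMatrix_mulVec_const_apply
    simp only [Matrix.mulVec, dotProduct, Function.const_apply, mul_one] at h1
    rw [hddef, ← h1]
    exact Finset.sum_congr rfl fun u _ => by rw [msymm A hA u v]
  have hAvv : A v v = 0 := by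
    rw [hAdef]; simp
  have hcsq : ∑ u : ({v}ᶜ : Set V), c u ^ 2 = d := by
    have hsq : ∀ u w, A u w ^ 2 = A u w := by
      intro u w
      rw [hAdef]
      simp only [SimpleGraph.adjMatrix_apply]
      by_cases h : G.Adj u w <;> simp [h]
    have h1 := hsplit (fun u => A u v ^ 2)
    have h2 : ∑ u, A u v ^ 2 = d := by
      rw [Finset.sum_congr rfl fun u _ => hsq u v, hcolsum]
    rw [h2, hAvv] at h1
    norm_num at h1
    simp only [hcdef]
    linarith [h1]
  -- spectral bounds for B
  have hσ2 : ∀ i, (hB.eigenvalues i)^2 ≤ σ^2 := fun i => eig_sq_le B hB hBnn i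
  set P := ∑ u : ({v}ᶜ : Set V), (B *ᵥ y) u ^ 2 with hPdef
  have hP : P ≤ σ^2 * (1 - a^2) := by
    rw [hPdef, ← hyn]
    exact normsq_mulVec_le B hB _ hσ2 y
  set T := ∑ u : ({v}ᶜ : Set V), c u * (B *ᵥ y) u with hTdef
  have hT : T^2 ≤ d * P := by
    have h1 := Finset.sum_mul_sq_le_sq_mul_sq Finset.univ c (fun u => (B *ᵥ y) u)
    calc T^2 = (∑ u : ({v}ᶜ : Set V), c u * (B *ᵥ y) u)^2 := rfl
      _ ≤ (∑ u : ({v}ᶜ : Set V), c u ^ 2) * ∑ u : ({v}ᶜ : Set V), (B *ᵥ y) u ^ 2 := h1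
      _ = d * P := by rw [hcsq]
  have hσ0 : 0 ≤ σ := by
    by_cases hne : Nonempty ({v}ᶜ : Set V)
    · exact iSup_eig_nonneg B hB hBnn
    · haveI := not_nonempty_iff.mp hne
      rw [hσdef, iSup_of_empty', Real.sSup_empty]
  -- Cauchy-Schwarz at v
  have hv2 : (A *ᵥ x) v ^ 2 ≤ d * (1 - a^2) := by
    have he : (A *ᵥ x) v = ∑ u ∈ G.neighborFinset v, x u := by
      rw [hAdef]; exact SimpleGraph.adjMatrix_mulVec_apply _ _ _
    have cs := Finset.sum_mul_sq_le_sq_mul_sq (G.neighborFinset v) (fun _ => (1:ℝ)) x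
    have h1 : ∑ _u ∈ G.neighborFinset v, ((1:ℝ))^2 = d := by
      simp [hddef]
    have h2 : ∑ u ∈ G.neighborFinset v, x u ^ 2 ≤ 1 - a^2 := by
      have hsubset : G.neighborFinset v ⊆ Finset.univ.erase v := by
        intro u hu
        exact Finset.mem_erase.mpr ⟨((G.mem_neighborFinset v u).mp hu).ne',
          Finset.mem_univ u⟩
      have h3 := Finset.add_sum_erase Finset.univ (fun u => x u ^ 2) (Finset.mem_univ v)
      have herase : ∑ u ∈ Finset.univ.erase v, x u ^ 2 = 1 - a^2 := by
        rw [hxn] at h3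
        simp only [hadef]
        linarith
      calc ∑ u ∈ G.neighborFinset v, x u ^ 2
          ≤ ∑ u ∈ Finset.univ.erase v, x u ^ 2 :=
            Finset.sum_le_sum_of_subset_of_nonneg hsubset (fun _ _ _ => sq_nonneg _)
        _ = 1 - a^2 := herase
    calc (A *ᵥ x) v ^ 2 = (∑ u ∈ G.neighborFinset v, (1:ℝ) * x u)^2 := by
          rw [he]
          congr 1
          exact Finset.sum_congr rfl fun u _ => (one_mul _).symm
      _ ≤ (∑ _u ∈ G.neighborFinset v, ((1:ℝ))^2) * ∑ u ∈ G.neighborFinset v, x u ^ 2 := cs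
      _ ≤ d * (1 - a^2) := by rw [h1]; exact mul_le_mul_of_nonneg_left h2 hd0
  -- expansion of the off-v part
  have hexp : ∑ u : ({v}ᶜ : Set V), (A *ᵥ x) ↑u ^ 2 = P + 2*a*T + a^2*d := by
    have h1 : ∀ u : ({v}ᶜ : Set V), (A *ᵥ x) ↑u ^ 2
        = (B *ᵥ y) u ^ 2 + (2*a)*(c u * (B *ᵥ y) u) + a^2 * c u ^ 2 := by
      intro u; rw [hdecomp u]; ring
    rw [Finset.sum_congr rfl fun u _ => h1 u, Finset.sum_add_distrib, Finset.sum_add_distrib,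
      ← Finset.mul_sum, ← Finset.mul_sum, hcsq, ← hPdef, ← hTdef]
  have hsplitρ : ρ^2 = (A *ᵥ x) v ^ 2 + ∑ u : ({v}ᶜ : Set V), (A *ᵥ x) ↑u ^ 2 := by
    rw [hρsq]; exact hsplit (fun u => (A *ᵥ x) u ^ 2)
  have hdP : d * P ≤ d * σ^2 * (1 - a^2) := by nlinarith [hP, hd0]
  have hcross : 2*a*T ≤ a^2*σ^2 + d*(1-a^2) :=
    cross_bound a T d σ (1-a^2) (by linarith) hd0 (le_trans hT hdP)
  nlinarith [hv2, hP, hcross, hsplitρ, hexp, ha1, hd0, mul_nonneg (sq_nonneg a) hd0]
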